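/- arXiv:1307.8097 — 4 statements merged into one kernel-verified Lean document; each statement's English description precedes it below -/
import Mathlib

section
/- Let A be a symmetric n×n matrix over GF(2) with zero diagonal and let v be an index. Let A' be the matrix obtained from A by simple local complementation at v (i.e., for x ≠ y both distinct from v with A(v,x)=A(v,y)=1, the entry A'(x,y) = A(x,y)+1, and all other entries of A' equal those of A). Then the binary matroids represented by (I | A | I+A) and (I | A' | I+A') are isomorphic, via row operations (adding row v to each row w with A(v,w)=1) followed by interchanging the v-th columns of the first and third blocks and, for each neighbor w of v, interchanging the w-th columns of the second and third blocks. -/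
open Matrix

/-- The representing matrix `(I | A | I + A)` of the isotropic/transition matroid. -/
noncomputable def isoMat {n : ℕ} (A : Matrix (Fin n) (Fin n) (ZMod 2)) :
    Matrix (Fin n) ((Fin n ⊕ Fin n) ⊕ Fin n) (ZMod 2) :=
  Matrix.fromCols (Matrix.fromCols 1 A) (1 + A)

/-- Simple local complementation of a symmetric zero-diagonal `GF(2)` matrix at `v`:
toggle the entry `A x y` for all pairs `x ≠ y` of distinct neighbors of `v`. -/
def localComp {n : ℕ} (A : Matrix (Fin n) (Fin n) (ZMod 2)) (v : Fin n) :
    Matrix (Fin n) (Fin n) (ZMod 2) :=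
  fun x y =>
    if x ≠ v ∧ y ≠ v ∧ x ≠ y ∧ A v x = 1 ∧ A v y = 1 then A x y + 1 else A x y

/-- The column bijection: interchange the `v`-th columns of the first and third blocks,
and for each neighbor `w` of `v`, interchange the `w`-th columns of the second and
third blocks. -/
def colSwap {n : ℕ} (A : Matrix (Fin n) (Fin n) (ZMod 2)) (v : Fin n) :
    ((Fin n ⊕ Fin n) ⊕ Fin n) → ((Fin n ⊕ Fin n) ⊕ Fin n)
  | .inl (.inl x) => if x = v then .inr x else .inl (.inl x)
  | .inl (.inr x) => if A v x = 1 then .inr x else .inl (.inr x)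
  | .inr x => if x = v then .inl (.inl x)
      else if A v x = 1 then .inl (.inr x) else .inr x

/-- The row-operation linear map: add `c v • (row v of A)` to `c`. -/
noncomputable def rowOpMap {n : ℕ} (A : Matrix (Fin n) (Fin n) (ZMod 2)) (v : Fin n) :
    (Fin n → ZMod 2) →ₗ[ZMod 2] (Fin n → ZMod 2) :=
  LinearMap.id + (LinearMap.proj v).smulRight (A v)

lemma zmod2_em (a : ZMod 2) : a = 0 ∨ a = 1 := by revert a; decide

lemma rowOpMap_apply {n : ℕ} (A : Matrix (Fin n) (Fin n) (ZMod 2)) (v : Fin n)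
    (c : Fin n → ZMod 2) (w : Fin n) :
    rowOpMap A v c w = c w + c v * A v w := by
  simp [rowOpMap]

lemma rowOpMap_invol {n : ℕ} (A : Matrix (Fin n) (Fin n) (ZMod 2)) (v : Fin n)
    (hdiag : A v v = 0) : Function.Involutive (rowOpMap A v) := by
  intro c
  funext w
  simp only [rowOpMap_apply, hdiag, mul_zero, add_zero]
  rcases zmod2_em (c w) with h | h <;> rcases zmod2_em (c v) with h' | h' <;>
    rcases zmod2_em (A v w) with h'' | h'' <;> rw [h, h', h''] <;> decide

/-- Key pointwise fact: applying the row operation to a column of `(I|A|I+A)` gives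
the `colSwap`-corresponding column of `(I|A'|I+A')`. -/
lemma key {n : ℕ} (A : Matrix (Fin n) (Fin n) (ZMod 2)) (hA : A.IsSymm)
    (hdiag : ∀ i, A i i = 0) (v : Fin n) (j : (Fin n ⊕ Fin n) ⊕ Fin n) :
    (isoMat (localComp A v))ᵀ (colSwap A v j) = rowOpMap A v ((isoMat A)ᵀ j) := by
  funext w
  rcases j with (x | x) | x <;>
  · have h1 : A x v = A v x := (hA.apply x v).symm
    have h2 : A w v = A v w := (hA.apply w v).symm
    have h3 : A x w = A w x := (hA.apply x w).symm
    have h4 := hdiag v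
    have h5 := hdiag w
    have h6 := hdiag x
    by_cases hx : x = v <;> by_cases hw : w = v <;> by_cases hwx : w = x <;>
      rcases zmod2_em (A v x) with hvx | hvx <;>
      rcases zmod2_em (A v w) with hvw | hvw <;>
      simp_all [isoMat, colSwap, localComp, rowOpMap_apply, Matrix.one_apply,
        Matrix.add_apply, Ne.symm] <;>
      rcases zmod2_em (A w x) with hwx2 | hwx2 <;>
      simp_all <;> decide

/-- Local complementation at `v` yields an isomorphic binary matroid: the explicit
column bijection `colSwap A v` preserves the rank of every set of columns of
`(I | A | I+A)` versus `(I | A' | I+A')`, where `A'` is the local complement. -/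
theorem isoMat_localComp_matroid_iso (n : ℕ) (A : Matrix (Fin n) (Fin n) (ZMod 2))
    (hA : A.IsSymm) (hdiag : ∀ i, A i i = 0) (v : Fin n)
    (S : Set ((Fin n ⊕ Fin n) ⊕ Fin n)) :
    Module.finrank (ZMod 2)
        (Submodule.span (ZMod 2) ((isoMat A)ᵀ '' S) : Submodule (ZMod 2) (Fin n → ZMod 2))
      = Module.finrank (ZMod 2)
        (Submodule.span (ZMod 2) ((isoMat (localComp A v))ᵀ '' (colSwap A v '' S)) :
          Submodule (ZMod 2) (Fin n → ZMod 2)) := by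
  have himg : (isoMat (localComp A v))ᵀ '' (colSwap A v '' S)
      = (rowOpMap A v) '' ((isoMat A)ᵀ '' S) := by
    ext y
    simp only [Set.mem_image]
    constructor
    · rintro ⟨_, ⟨j, hj, rfl⟩, rfl⟩
      exact ⟨_, ⟨j, hj, rfl⟩, (key A hA hdiag v j).symm⟩
    · rintro ⟨_, ⟨j, hj, rfl⟩, rfl⟩
      exact ⟨_, ⟨j, hj, rfl⟩, key A hA hdiag v j⟩
  rw [himg,
    show ⇑(rowOpMap A v)
        = ⇑(LinearEquiv.ofInvolutive (rowOpMap A v) (rowOpMap_invol A v (hdiag v))) from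
      (LinearEquiv.coe_ofInvolutive _ _).symm]
  have h := LinearEquiv.finrank_map_eq
    (LinearEquiv.ofInvolutive (rowOpMap A v) (rowOpMap_invol A v (hdiag v)))
    (Submodule.span (ZMod 2) ((isoMat A)ᵀ '' S))
  rw [Submodule.map_span] at h
  exact h.symm
end

section
/- Let n = n₁ + n₂ and suppose A is a symmetric n×n GF(2) matrix with zero diagonal in block form with zero diagonal blocks: A = [[0, B],[Bᵀ, 0]], where B is n₁×n₂. Consider the represented matroid M on 3n columns given by (I | A | I+A). Let T₁ consist of the first-block columns indexed by the first n₁ indices together with the second-block columns indexed by the last n₂ indices, and let T₂ consist of the first-block columns indexed by the last n₂ indices together with the second-block columns indexed by the first n₁ indices. Then r(T₁) + r(T₂) = n. -/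
open Matrix

/-- The rank function of the binary matroid represented by the columns of a
`GF(2)` matrix `N`. -/
noncomputable def binRank {m η : Type*} (N : Matrix m η (ZMod 2)) (X : Set η) : ℕ :=
  Module.finrank (ZMod 2)
    (Submodule.span (ZMod 2) (Nᵀ '' X) : Submodule (ZMod 2) (m → ZMod 2))

private lemma finrank_span_singles {ι V : Type*} [Fintype ι] [Finite V] [DecidableEq V]
    (f : ι → V) (hf : Function.Injective f) :
    Module.finrank (ZMod 2)
      (Submodule.span (ZMod 2)
        (Set.range fun i => (Pi.single (f i) (1 : ZMod 2) : V → ZMod 2)))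
      = Fintype.card ι := by
  have li : LinearIndependent (ZMod 2) fun i => (Pi.single (f i) (1 : ZMod 2) : V → ZMod 2) := by
    have h := ((Pi.basisFun (ZMod 2) V).linearIndependent.comp f hf)
    have he : (⇑(Pi.basisFun (ZMod 2) V) ∘ f) = fun i => (Pi.single (f i) (1 : ZMod 2) : V → ZMod 2) := by
      funext i; simp [Function.comp]
    rwa [he] at h
  exact finrank_span_eq_card li


/-- For the bipartite adjacency matrix `A = [[0, B], [Bᵀ, 0]]`, consider the matroid
represented by `(I | A | I + A)`.  Taking `T₁` to be the first-block columns on the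
first `n₁` indices together with the second-block columns on the last `n₂` indices,
and `T₂` to be the first-block columns on the last `n₂` indices together with the
second-block columns on the first `n₁` indices, we get `r T₁ + r T₂ = n = n₁ + n₂`. -/
theorem bipartite_rank_add (n₁ n₂ : ℕ) (B : Matrix (Fin n₁) (Fin n₂) (ZMod 2)) :
    letI V := Fin n₁ ⊕ Fin n₂
    letI A : Matrix V V (ZMod 2) := Matrix.fromBlocks 0 B Bᵀ 0
    letI M : Matrix V ((V ⊕ V) ⊕ V) (ZMod 2) :=
      Matrix.fromCols (Matrix.fromCols 1 A) (1 + A)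
    letI T₁ : Set ((V ⊕ V) ⊕ V) :=
      {j | ∃ x : Fin n₁, j = Sum.inl (Sum.inl (Sum.inl x))} ∪
        {j | ∃ y : Fin n₂, j = Sum.inl (Sum.inr (Sum.inr y))}
    letI T₂ : Set ((V ⊕ V) ⊕ V) :=
      {j | ∃ y : Fin n₂, j = Sum.inl (Sum.inl (Sum.inr y))} ∪
        {j | ∃ x : Fin n₁, j = Sum.inl (Sum.inr (Sum.inl x))}
    binRank M T₁ + binRank M T₂ = n₁ + n₂ := by
  set V := Fin n₁ ⊕ Fin n₂
  set A : Matrix V V (ZMod 2) := Matrix.fromBlocks 0 B Bᵀ 0 with hA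
  set M : Matrix V ((V ⊕ V) ⊕ V) (ZMod 2) :=
      Matrix.fromCols (Matrix.fromCols 1 A) (1 + A) with hM
  -- column identities
  have h1 : ∀ x : Fin n₁, Mᵀ (Sum.inl (Sum.inl (Sum.inl x)))
      = Pi.single (Sum.inl x : V) (1 : ZMod 2) := by
    intro x; funext v
    simp [hM, Matrix.fromCols, Matrix.one_apply, Pi.single_apply, eq_comm]
  have h2 : ∀ y : Fin n₂, Mᵀ (Sum.inl (Sum.inr (Sum.inr y))) =
      ∑ x : Fin n₁, B x y • Pi.single (Sum.inl x : V) (1 : ZMod 2) := by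
    intro y; funext v
    cases v with
    | inl x => simp [hM, hA, Matrix.fromCols, Pi.single_apply]
    | inr y' => simp [hM, hA, Matrix.fromCols, Pi.single_apply]
  have h3 : ∀ y : Fin n₂, Mᵀ (Sum.inl (Sum.inl (Sum.inr y)))
      = Pi.single (Sum.inr y : V) (1 : ZMod 2) := by
    intro y; funext v
    simp [hM, Matrix.fromCols, Matrix.one_apply, Pi.single_apply, eq_comm]
  have h4 : ∀ x : Fin n₁, Mᵀ (Sum.inl (Sum.inr (Sum.inl x))) =
      ∑ y : Fin n₂, B x y • Pi.single (Sum.inr y : V) (1 : ZMod 2) := by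
    intro x; funext v
    cases v with
    | inl x' => simp [hM, hA, Matrix.fromCols, Pi.single_apply]
    | inr y' => simp [hM, hA, Matrix.fromCols, Pi.single_apply]
  have key : ∀ (T : Set ((V ⊕ V) ⊕ V)) (ι : Type) (_ : Fintype ι) (g : ι → V)
      (hg : Function.Injective g)
      (hsub : ∀ j ∈ T, Mᵀ j ∈ Submodule.span (ZMod 2)
        (Set.range fun i => Pi.single (g i) (1 : ZMod 2)))
      (hsup : ∀ i : ι, Pi.single (g i) (1 : ZMod 2) ∈ Mᵀ '' T),
      binRank M T = Fintype.card ι := by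
    intro T ι _ g hg hsub hsup
    have hspan : Submodule.span (ZMod 2) (Mᵀ '' T) =
        Submodule.span (ZMod 2) (Set.range fun i => Pi.single (g i) (1 : ZMod 2)) := by
      apply le_antisymm
      · rw [Submodule.span_le]
        rintro v ⟨j, hj, rfl⟩
        exact hsub j hj
      · rw [Submodule.span_le]
        rintro v ⟨i, rfl⟩
        exact Submodule.subset_span (hsup i)
    unfold binRank
    rw [hspan]
    exact finrank_span_singles g hg
  have r1 : binRank M
      ({j | ∃ x : Fin n₁, j = Sum.inl (Sum.inl (Sum.inl x))} ∪
        {j | ∃ y : Fin n₂, j = Sum.inl (Sum.inr (Sum.inr y))}) = n₁ := by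
    rw [key _ (Fin n₁) inferInstance (Sum.inl) Sum.inl_injective]
    · simp
    · rintro j (⟨x, rfl⟩ | ⟨y, rfl⟩)
      · rw [h1]; exact Submodule.subset_span ⟨x, rfl⟩
      · rw [h2]
        exact Submodule.sum_mem _ fun x _ =>
          Submodule.smul_mem _ _ (Submodule.subset_span ⟨x, rfl⟩)
    · intro x
      exact ⟨Sum.inl (Sum.inl (Sum.inl x)), Or.inl ⟨x, rfl⟩, h1 x⟩
  have r2 : binRank M
      ({j | ∃ y : Fin n₂, j = Sum.inl (Sum.inl (Sum.inr y))} ∪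
        {j | ∃ x : Fin n₁, j = Sum.inl (Sum.inr (Sum.inl x))}) = n₂ := by
    rw [key _ (Fin n₂) inferInstance (Sum.inr) Sum.inr_injective]
    · simp
    · rintro j (⟨y, rfl⟩ | ⟨x, rfl⟩)
      · rw [h3]; exact Submodule.subset_span ⟨y, rfl⟩
      · rw [h4]
        exact Submodule.sum_mem _ fun y _ =>
          Submodule.smul_mem _ _ (Submodule.subset_span ⟨y, rfl⟩)
    · intro y
      exact ⟨Sum.inl (Sum.inl (Sum.inr y)), Or.inl ⟨y, rfl⟩, h3 y⟩
  rw [r1, r2]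
end

section
/- Let A be a symmetric n×n GF(2) matrix with zero diagonal, and let V = V₁ ⊔ V₂ be a partition of the index set. If, in the matroid represented by (I | A | I+A), the set T₁ = {first-block columns indexed by V₁} ∪ {second-block columns indexed by V₂} has rank |V₁|, then A(x,y) = 0 for all x, y ∈ V₂. -/
open Matrix

/-- Let `A` be symmetric with zero diagonal over `GF(2)` and `V = V₁ ⊔ V₂` a
partition of indices. If, in the matroid represented by `(I | A | I + A)`, the set
consisting of the first-block columns indexed by `V₁` and the second-block columns
indexed by `V₂` has rank `|V₁|`, then `A x y = 0` for all `x, y ∈ V₂`. -/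
theorem adj_zero_of_rank_eq (n : ℕ) (A : Matrix (Fin n) (Fin n) (ZMod 2))
    (hA : A.IsSymm) (hdiag : ∀ i, A i i = 0) (V₁ : Set (Fin n))
    (hrk : binRank
        (Matrix.fromCols (Matrix.fromCols (1 : Matrix (Fin n) (Fin n) (ZMod 2)) A)
          ((1 : Matrix (Fin n) (Fin n) (ZMod 2)) + A))
        ({j | ∃ x ∈ V₁, j = Sum.inl (Sum.inl x)} ∪
          {j | ∃ y ∈ V₁ᶜ, j = Sum.inl (Sum.inr y)}) = V₁.ncard) :
    ∀ x ∈ V₁ᶜ, ∀ y ∈ V₁ᶜ, A x y = 0 := by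
  classical
  intro x hx y hy
  set N := Matrix.fromCols
      (Matrix.fromCols (1 : Matrix (Fin n) (Fin n) (ZMod 2)) A)
      ((1 : Matrix (Fin n) (Fin n) (ZMod 2)) + A) with hN
  set X : Set ((Fin n ⊕ Fin n) ⊕ Fin n) :=
      ({j | ∃ x ∈ V₁, j = Sum.inl (Sum.inl x)} ∪
        {j | ∃ y ∈ V₁ᶜ, j = Sum.inl (Sum.inr y)}) with hX
  set S : Submodule (ZMod 2) (Fin n → ZMod 2) := Submodule.span (ZMod 2) (Nᵀ '' X) with hS
  -- columns
  have hcol1 : ∀ z : Fin n, Nᵀ (Sum.inl (Sum.inl z)) = Pi.single z (1 : ZMod 2) := by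
    intro z; ext i
    simp [hN, Matrix.transpose_apply, Matrix.one_apply, Pi.single_apply]
  have hcol2 : ∀ z : Fin n, Nᵀ (Sum.inl (Sum.inr z)) = fun i => A i z := by
    intro z; ext i
    simp [hN, Matrix.transpose_apply]
  -- W : span of the singles
  set W : Submodule (ZMod 2) (Fin n → ZMod 2) :=
      Submodule.span (ZMod 2) ((fun z : Fin n => Pi.single z (1 : ZMod 2)) '' V₁) with hW
  have hWS : W ≤ S := by
    apply Submodule.span_le.2
    rintro _ ⟨z, hz, rfl⟩
    apply Submodule.subset_span
    exact ⟨Sum.inl (Sum.inl z), Or.inl ⟨z, hz, rfl⟩, hcol1 z⟩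
  have li : LinearIndependent (ZMod 2)
      (fun z : V₁ => (Pi.single (z : Fin n) (1 : ZMod 2) : Fin n → ZMod 2)) := by
    have hb := (Pi.basisFun (ZMod 2) (Fin n)).linearIndependent
    have h2 := hb.comp (Subtype.val : V₁ → Fin n) Subtype.val_injective
    have heq : (fun z : V₁ => (Pi.single (z : Fin n) (1 : ZMod 2) : Fin n → ZMod 2)) =
        (Pi.basisFun (ZMod 2) (Fin n)) ∘ (Subtype.val : V₁ → Fin n) := by
      funext z; simp [Function.comp]
    rw [heq]; exact h2
  have hWrank : Module.finrank (ZMod 2) W = V₁.ncard := by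
    have h := finrank_span_eq_card li
    rw [hW, Set.image_eq_range]
    rw [h]
    rw [← Nat.card_eq_fintype_card, Nat.card_coe_set_eq]
  have hfin : Module.finrank (ZMod 2) S = Module.finrank (ZMod 2) W := by
    have : Module.finrank (ZMod 2) S = V₁.ncard := hrk
    rw [this, hWrank]
  have hWS' : W = S := Submodule.eq_of_le_of_finrank_eq hWS hfin.symm
  -- the column A_y is in S = W
  have hmem : (fun i => A i y) ∈ W := by
    rw [hWS']
    apply Submodule.subset_span
    exact ⟨Sum.inl (Sum.inr y), Or.inr ⟨y, hy, rfl⟩, hcol2 y⟩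
  -- W vanishes at x
  have hker : W ≤ LinearMap.ker (LinearMap.proj (R := ZMod 2) (φ := fun _ : Fin n => ZMod 2) x) := by
    apply Submodule.span_le.2
    rintro _ ⟨z, hz, rfl⟩
    have hxz : x ≠ z := by rintro rfl; exact hx hz
    simp [LinearMap.mem_ker, Pi.single_apply, hxz]
  have := hker hmem
  simpa [LinearMap.mem_ker] using this
end

section
/- A double occurrence word (a word of length 2n in n letters, each occurring exactly twice) has a disconnected interlacement graph if and only if some cyclic permutation of the word is a concatenation of two nonempty double occurrence words on disjoint letter sets. -/
/-- `w` is a double occurrence word: every letter occurs exactly twice. -/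
def IsDOW {N n : ℕ} (w : Fin N → Fin n) : Prop :=
  ∀ l : Fin n, (Finset.univ.filter fun i => w i = l).card = 2

/-- Letters `a` and `b` occur in the interlaced pattern `a … b … a … b` in `w`. -/
def Interlaced {N : ℕ} {L : Type*} (w : Fin N → L) (a b : L) : Prop :=
  ∃ i₁ j₁ i₂ j₂ : Fin N, i₁ < j₁ ∧ j₁ < i₂ ∧ i₂ < j₂ ∧
    w i₁ = a ∧ w i₂ = a ∧ w j₁ = b ∧ w j₂ = b

/-- The interlacement graph of a word: letters are adjacent iff they are interlaced. -/
def interlacementGraph {N : ℕ} {L : Type*} (w : Fin N → L) : SimpleGraph L :=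
  SimpleGraph.fromRel (Interlaced w)


section InterlacementAux


lemma mod_split {N x : ℕ} (hN : 0 < N) (hx : x < 2*N) : x % N = if x < N then x else x - N := by
  split
  · exact Nat.mod_eq_of_lt ‹_›
  · rw [Nat.mod_eq_sub_mod (le_of_not_gt ‹_›), Nat.mod_eq_of_lt (by omega)]

lemma no_alternate {N k m : ℕ} (hN : 0 < N) {u1 u2 v1 v2 : ℕ}
    (hu1 : u1 < m) (hu2 : u2 < m) (hv1 : m ≤ v1) (hv2 : m ≤ v2)
    (hv1N : v1 < N) (hv2N : v2 < N) (hmN : m ≤ N)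
    (h1 : (u1 + k) % N < (v1 + k) % N) (h2 : (v1 + k) % N < (u2 + k) % N)
    (h3 : (u2 + k) % N < (v2 + k) % N) : False := by
  have hkN : k % N < N := Nat.mod_lt _ hN
  have e : ∀ t, t < N → (t + k) % N = if t + k % N < N then t + k % N else t + k % N - N := by
    intro t ht
    rw [Nat.add_mod, Nat.mod_eq_of_lt ht, mod_split hN (by omega)]
  rw [e u1 (by omega), e v1 hv1N] at h1
  rw [e v1 hv1N, e u2 (by omega)] at h2
  rw [e u2 (by omega), e v2 hv2N] at h3
  split_ifs at h1 h2 h3 <;> omega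

lemma no_alternate' {N k m : ℕ} (hN : 0 < N) {u1 u2 v1 v2 : ℕ}
    (hu1 : u1 < m) (hu2 : u2 < m) (hv1 : m ≤ v1) (hv2 : m ≤ v2)
    (hv1N : v1 < N) (hv2N : v2 < N) (hmN : m ≤ N)
    (h1 : (v1 + k) % N < (u1 + k) % N) (h2 : (u1 + k) % N < (v2 + k) % N)
    (h3 : (v2 + k) % N < (u2 + k) % N) : False := by
  have hkN : k % N < N := Nat.mod_lt _ hN
  have e : ∀ t, t < N → (t + k) % N = if t + k % N < N then t + k % N else t + k % N - N := by
    intro t ht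
    rw [Nat.add_mod, Nat.mod_eq_of_lt ht, mod_split hN (by omega)]
  rw [e u1 (by omega), e v1 hv1N] at h1
  rw [e u1 (by omega), e v2 hv2N] at h2
  rw [e v2 hv2N, e u2 (by omega)] at h3
  split_ifs at h1 h2 h3 <;> omega

lemma walk_closed {V : Type*} {G : SimpleGraph V} {P : V → Prop}
    (hP : ∀ x y, P x → G.Adj x y → P y) :
    ∀ {a b : V}, G.Walk a b → P a → P b
  | _, _, SimpleGraph.Walk.nil, ha => ha
  | _, _, SimpleGraph.Walk.cons h q, ha => walk_closed hP q (hP _ _ ha h)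

lemma reach_closed {V : Type*} {G : SimpleGraph V} {P : V → Prop}
    (hP : ∀ x y, P x → G.Adj x y → P y) {a b : V} (h : G.Reachable a b) (ha : P a) : P b :=
  h.elim fun p => walk_closed hP p ha

lemma IsDOW.exists_pair {N n : ℕ} {w : Fin N → Fin n} (hw : IsDOW w) (l : Fin n) :
    ∃ u v : Fin N, u < v ∧ w u = l ∧ w v = l := by
  obtain ⟨u, hu, v, hv, huv⟩ := Finset.one_lt_card.mp (by rw [hw l]; norm_num :
    1 < (Finset.univ.filter fun i => w i = l).card)
  simp only [Finset.mem_filter, Finset.mem_univ, true_and] at hu hv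
  rcases lt_or_gt_of_ne huv with h | h
  · exact ⟨u, v, h, hu, hv⟩
  · exact ⟨v, u, h, hv, hu⟩

lemma IsDOW.eq_or_eq {N n : ℕ} {w : Fin N → Fin n} (hw : IsDOW w) {l : Fin n}
    {u v s : Fin N} (huv : u ≠ v) (hu : w u = l) (hv : w v = l) (hs : w s = l) :
    s = u ∨ s = v := by
  have hsub : ({u, v} : Finset (Fin N)) ⊆ Finset.univ.filter fun i => w i = l := by
    intro t ht
    simp only [Finset.mem_insert, Finset.mem_singleton] at ht
    rcases ht with rfl | rfl <;> simp [hu, hv]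
  have hcard : ((Finset.univ.filter fun i => w i = l) : Finset (Fin N)).card ≤
      ({u, v} : Finset (Fin N)).card := by
    rw [hw l, Finset.card_insert_of_notMem (by simp [huv]), Finset.card_singleton]
  have heq := Finset.eq_of_subset_of_card_le hsub hcard
  have : s ∈ ({u, v} : Finset (Fin N)) := heq ▸ (by simp [hs])
  simpa using this

theorem mp_rev (n : ℕ) (hn : 1 ≤ n)
    (w : Fin (2 * n) → Fin n) (hw : IsDOW w)
    (h : ∃ k m : ℕ, 0 < m ∧ m < 2 * n ∧
        ∀ i j : Fin (2 * n), i.val < m → m ≤ j.val →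
          w ⟨(i.val + k) % (2 * n), Nat.mod_lt _ (Nat.mul_pos Nat.zero_lt_two hn)⟩ ≠
            w ⟨(j.val + k) % (2 * n), Nat.mod_lt _ (Nat.mul_pos Nat.zero_lt_two hn)⟩) :
    ¬ (interlacementGraph w).Connected := by
  obtain ⟨k, m, hm0, hm2n, h⟩ := h
  intro hconn
  have hN : 0 < 2 * n := by omega
  set G := interlacementGraph w with hG
  let σ : Fin (2*n) → Fin (2*n) := fun i => ⟨(i.val + k) % (2*n), Nat.mod_lt _ hN⟩
  have hσval : ∀ i : Fin (2*n), (σ i).val = (i.val + k) % (2*n) := fun _ => rfl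
  have hσinj : Function.Injective σ := by
    intro i j hij
    have h0 : (i.val + k) % (2*n) = (j.val + k) % (2*n) := congrArg Fin.val hij
    have h2 : i.val % (2*n) = j.val % (2*n) := Nat.ModEq.add_right_cancel' k h0
    exact Fin.ext (by rwa [Nat.mod_eq_of_lt i.isLt, Nat.mod_eq_of_lt j.isLt] at h2)
  have hσsurj : Function.Surjective σ := Finite.surjective_of_injective hσinj
  set A : Fin n → Prop := fun l => ∃ i : Fin (2*n), i.val < m ∧ w (σ i) = l with hA
  have hAocc : ∀ l, A l → ∀ t : Fin (2*n), w t = l → ∃ i : Fin (2*n), i.val < m ∧ σ i = t := by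
    rintro l ⟨i0, hi0, hw0⟩ t ht
    obtain ⟨j, hj⟩ := hσsurj t
    by_cases hjm : j.val < m
    · exact ⟨j, hjm, hj⟩
    · exact absurd (hw0.trans (hj ▸ ht).symm) (h i0 j hi0 (not_lt.1 hjm))
  have hclosed : ∀ x y, A x → G.Adj x y → A y := by
    intro x y hax hadj
    by_contra hay
    have hyocc : ∀ t : Fin (2*n), w t = y → ∃ j : Fin (2*n), m ≤ j.val ∧ σ j = t := by
      intro t ht
      obtain ⟨j, hj⟩ := hσsurj t
      by_cases hjm : j.val < m
      · exact absurd ⟨j, hjm, hj ▸ ht⟩ hay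
      · exact ⟨j, not_lt.1 hjm, hj⟩
    rw [hG, interlacementGraph, SimpleGraph.fromRel_adj] at hadj
    obtain ⟨hne, hint | hint⟩ := hadj
    · obtain ⟨i1, j1, i2, j2, l12, l23, l34, e1, e2, e3, e4⟩ := hint
      obtain ⟨u1, hu1, su1⟩ := hAocc x hax i1 e1
      obtain ⟨u2, hu2, su2⟩ := hAocc x hax i2 e2
      obtain ⟨v1, hv1, sv1⟩ := hyocc j1 e3
      obtain ⟨v2, hv2, sv2⟩ := hyocc j2 e4
      refine no_alternate (k := k) hN hu1 hu2 hv1 hv2 v1.isLt v2.isLt (le_of_lt hm2n) ?_ ?_ ?_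
      · rw [← hσval u1, ← hσval v1, su1, sv1]; exact l12
      · rw [← hσval v1, ← hσval u2, sv1, su2]; exact l23
      · rw [← hσval u2, ← hσval v2, su2, sv2]; exact l34
    · obtain ⟨i1, j1, i2, j2, l12, l23, l34, e1, e2, e3, e4⟩ := hint
      obtain ⟨v1, hv1, sv1⟩ := hyocc i1 e1
      obtain ⟨v2, hv2, sv2⟩ := hyocc i2 e2
      obtain ⟨u1, hu1, su1⟩ := hAocc x hax j1 e3
      obtain ⟨u2, hu2, su2⟩ := hAocc x hax j2 e4
      refine no_alternate' (k := k) hN hu1 hu2 hv1 hv2 v1.isLt v2.isLt (le_of_lt hm2n) ?_ ?_ ?_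
      · rw [← hσval v1, ← hσval u1, sv1, su1]; exact l12
      · rw [← hσval u1, ← hσval v2, su1, sv2]; exact l23
      · rw [← hσval v2, ← hσval u2, sv2, su2]; exact l34
  have ha : A (w (σ ⟨0, hN⟩)) := ⟨⟨0, hN⟩, hm0, rfl⟩
  have hb : ¬ A (w (σ ⟨m, hm2n⟩)) := by
    intro hab
    obtain ⟨i, him, hi⟩ := hAocc _ hab (σ ⟨m, hm2n⟩) rfl
    have : i = ⟨m, hm2n⟩ := hσinj hi
    have : i.val = m := congrArg Fin.val this
    omega
  exact hb (reach_closed hclosed (hconn.preconnected _ _) ha)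

theorem mp_fwd (n : ℕ) (hn : 1 ≤ n) (w : Fin (2 * n) → Fin n) (hw : IsDOW w)
    (hc : ¬ (interlacementGraph w).Connected) :
    ∃ k m : ℕ, 0 < m ∧ m < 2 * n ∧
        ∀ i j : Fin (2 * n), i.val < m → m ≤ j.val →
          w ⟨(i.val + k) % (2 * n), Nat.mod_lt _ (Nat.mul_pos Nat.zero_lt_two hn)⟩ ≠
            w ⟨(j.val + k) % (2 * n), Nat.mod_lt _ (Nat.mul_pos Nat.zero_lt_two hn)⟩ := by
  classical
  have hN : 0 < 2 * n := by omega
  set G := interlacementGraph w with hG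
  have hnp : ¬ G.Preconnected := by
    intro hp
    exact hc ((SimpleGraph.connected_iff G).mpr ⟨hp, ⟨⟨0, hn⟩⟩⟩)
  have hex : ∃ x y : Fin n, ¬ G.Reachable x y := by
    by_contra hxy; push_neg at hxy; exact hnp hxy
  obtain ⟨x, y, hxy⟩ := hex
  set a0 := w ⟨0, hN⟩ with ha0
  have hbex : ∃ b : Fin n, ¬ G.Reachable a0 b := by
    by_cases hx : G.Reachable a0 x
    · exact ⟨y, fun h => hxy (hx.symm.trans h)⟩
    · exact ⟨x, hx⟩
  obtain ⟨b, hb⟩ := hbex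
  set PS : Finset (Fin (2 * n)) := Finset.univ.filter (fun t => G.Reachable b (w t)) with hPS
  have hmem : ∀ t : Fin (2 * n), t ∈ PS ↔ G.Reachable b (w t) := by
    intro t; simp [hPS]
  have hPSne : PS.Nonempty := by
    obtain ⟨u, v, _, hu, _⟩ := hw.exists_pair b
    exact ⟨u, (hmem u).2 (by rw [hu])⟩
  set p := PS.min' hPSne with hpdef
  set q := PS.max' hPSne with hqdef
  have hpPS : p ∈ PS := PS.min'_mem hPSne
  have hqPS : q ∈ PS := PS.max'_mem hPSne
  have hple : ∀ t ∈ PS, p.val ≤ t.val := fun t ht => Fin.le_def.1 (PS.min'_le t ht)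
  have hqge : ∀ t ∈ PS, t.val ≤ q.val := fun t ht => Fin.le_def.1 (PS.le_max' t ht)
  have hp0 : 0 < p.val := by
    by_contra h0
    have hpe : p = ⟨0, hN⟩ := Fin.ext (by simp only [Fin.val_mk]; omega)
    have h1 := (hmem p).1 hpPS
    rw [hpe] at h1
    exact hb h1.symm
  have hpq : p.val ≤ q.val := hqge p hpPS
  have CORE : ∀ s t : Fin (2 * n), p.val ≤ s.val → s.val ≤ q.val →
      (t.val < p.val ∨ q.val < t.val) → w s ≠ w t := by
    intro s t hps hsq ht heq
    by_cases hSx : G.Reachable b (w s)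
    · have htPS : t ∈ PS := (hmem t).2 (by rw [← heq]; exact hSx)
      have h1 := hple t htPS
      have h2 := hqge t htPS
      omega
    · have hcov : ∃ u v : Fin (2 * n), u.val < s.val ∧ s.val < v.val ∧ w u = w v ∧
          G.Reachable b (w u) := by
        by_contra hcov
        push_neg at hcov
        have hbp : G.Reachable b (w p) := (hmem p).1 hpPS
        have hbq : G.Reachable b (w q) := (hmem q).1 hqPS
        have dich : ∀ l : Fin n, G.Reachable b l →
            (∀ r : Fin (2 * n), w r = l → r.val < s.val) ∨
            (∀ r : Fin (2 * n), w r = l → s.val < r.val) := by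
          intro l hl
          obtain ⟨u, v, huv, hu, hv⟩ := hw.exists_pair l
          have hne : ∀ r : Fin (2 * n), w r = l → r.val ≠ s.val := by
            intro r hr hrs
            apply hSx
            have : r = s := Fin.ext hrs
            rw [this] at hr
            rw [hr]; exact hl
          have huvlt := Fin.lt_def.1 huv
          rcases lt_trichotomy v.val s.val with h | h | h
          · left; intro r hr
            rcases hw.eq_or_eq (ne_of_lt huv) hu hv hr with rfl | rfl
            · omega
            · exact h
          · exact absurd h (hne v hv)
          · rcases lt_trichotomy u.val s.val with h' | h' | h'
            · exact absurd hl (by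
                have := hcov u v h' h (hu.trans hv.symm)
                rw [hu] at this; exact this)
            · exact absurd h' (hne u hu)
            · right; intro r hr
              rcases hw.eq_or_eq (ne_of_lt huv) hu hv hr with rfl | rfl
              · exact h'
              · exact h
        have hpslt : p.val < s.val := by
          rcases Nat.lt_or_ge p.val s.val with h | h
          · exact h
          · exfalso
            have : p = s := Fin.ext (by omega)
            exact hSx (this ▸ hbp)
        have hqslt : s.val < q.val := by
          rcases Nat.lt_or_ge s.val q.val with h | h
          · exact h
          · exfalso
            have : q = s := Fin.ext (by omega)
            exact hSx (this ▸ hbq)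
        have hLp : ∀ r : Fin (2 * n), w r = w p → r.val < s.val := by
          rcases dich (w p) hbp with hL | hR
          · exact hL
          · exact absurd (hR p rfl) (by omega)
        have hRq : ∀ r : Fin (2 * n), w r = w q → s.val < r.val := by
          rcases dich (w q) hbq with hL | hR
          · exact absurd (hL q rfl) (by omega)
          · exact hR
        have hstep : ∀ x' y' : Fin n,
            (G.Reachable b x' ∧ ∀ r : Fin (2 * n), w r = x' → r.val < s.val) → G.Adj x' y' →
            (G.Reachable b y' ∧ ∀ r : Fin (2 * n), w r = y' → r.val < s.val) := by
          rintro x' y' ⟨hx1, hx2⟩ hadj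
          have hy1 : G.Reachable b y' := hx1.trans hadj.reachable
          refine ⟨hy1, ?_⟩
          rcases dich y' hy1 with hL | hR
          · exact hL
          · exfalso
            rw [hG, interlacementGraph, SimpleGraph.fromRel_adj] at hadj
            obtain ⟨hne', hint | hint⟩ := hadj
            · obtain ⟨i1, j1, i2, j2, l12, l23, l34, e1, e2, e3, e4⟩ := hint
              have a1 := hx2 i2 e2
              have a2 := hR j1 e3
              have a3 := Fin.lt_def.1 l23
              omega
            · obtain ⟨i1, j1, i2, j2, l12, l23, l34, e1, e2, e3, e4⟩ := hint
              have a1 := hR i1 e1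
              have a2 := hx2 j1 e3
              have a3 := Fin.lt_def.1 l12
              omega
        have := (reach_closed hstep (hbp.symm.trans hbq) ⟨hbp, hLp⟩).2 q rfl
        omega
      obtain ⟨u, v, hus, hsv, huv, hRu⟩ := hcov
      have huPS : u ∈ PS := (hmem u).2 hRu
      have hvPS : v ∈ PS := (hmem v).2 (by rw [← huv]; exact hRu)
      have hpu : p.val ≤ u.val := hple u huPS
      have hvq : v.val ≤ q.val := hqge v hvPS
      have hxne : w s ≠ w u := fun hE => hSx (by rw [hE]; exact hRu)
      rcases ht with hlt | hgt
      · have hint : Interlaced w (w s) (w u) :=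
          ⟨t, u, s, v, Fin.lt_def.2 (by omega), Fin.lt_def.2 hus, Fin.lt_def.2 hsv,
            heq.symm, rfl, rfl, huv.symm⟩
        have hadj : G.Adj (w s) (w u) := by
          rw [hG, interlacementGraph, SimpleGraph.fromRel_adj]
          exact ⟨hxne, Or.inl hint⟩
        exact hSx (hRu.trans hadj.symm.reachable)
      · have hint : Interlaced w (w u) (w s) :=
          ⟨u, s, v, t, Fin.lt_def.2 hus, Fin.lt_def.2 hsv, Fin.lt_def.2 (by omega),
            rfl, huv.symm, rfl, heq.symm⟩
        have hadj : G.Adj (w u) (w s) := by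
          rw [hG, interlacementGraph, SimpleGraph.fromRel_adj]
          exact ⟨fun hE => hxne hE.symm, Or.inl hint⟩
        exact hSx (hRu.trans hadj.reachable)
  refine ⟨p.val, q.val + 1 - p.val, by omega, by omega, ?_⟩
  intro i j hi hj
  have hval1 : (i.val + p.val) % (2 * n) = i.val + p.val := Nat.mod_eq_of_lt (by omega)
  have hsplit : (j.val + p.val) % (2 * n) =
      if j.val + p.val < 2 * n then j.val + p.val else j.val + p.val - 2 * n :=
    mod_split hN (by omega)
  apply CORE
  · show p.val ≤ (i.val + p.val) % (2 * n)
    rw [hval1]; omega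
  · show (i.val + p.val) % (2 * n) ≤ q.val
    rw [hval1]; omega
  · show (j.val + p.val) % (2 * n) < p.val ∨ q.val < (j.val + p.val) % (2 * n)
    rw [hsplit]
    split_ifs <;> omega

end InterlacementAux

/-- A double occurrence word has a disconnected interlacement graph iff some cyclic
permutation of it is the concatenation of two nonempty double occurrence words on
disjoint letter sets. -/
theorem interlacement_disconnected_iff_concat (n : ℕ) (hn : 1 ≤ n)
    (w : Fin (2 * n) → Fin n) (hw : IsDOW w) :
    ¬ (interlacementGraph w).Connected ↔
      ∃ k m : ℕ, 0 < m ∧ m < 2 * n ∧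
        ∀ i j : Fin (2 * n), i.val < m → m ≤ j.val →
          w ⟨(i.val + k) % (2 * n), Nat.mod_lt _ (by omega)⟩ ≠
            w ⟨(j.val + k) % (2 * n), Nat.mod_lt _ (by omega)⟩ := by
  exact ⟨mp_fwd n hn w hw, fun h => mp_rev n hn w hw h⟩
end
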